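/- Suppose every Q ∈ 𝐐 satisfies instrument exogeneity and generalized monotonicity, and 𝐐 satisfies unrestricted potential outcomes. Then for any observed distribution P with P{Z = z} > 0 for all z ∈ 𝒵 and 𝐐₀(P, 𝐐) ≠ ∅, one has Θ₀(P, 𝐐) = Θ₀(P, 𝐐*_{E,M}) = Θ₀(P, 𝐐*_E). -/

import Mathlib

open Finset

/-- A probability mass function on a finite type. -/
structure ProbMass (α : Type) [Fintype α] where
  mass : α → ℝ
  nonneg : ∀ a, 0 ≤ mass a
  total : ∑ a, mass a = 1

/-- Probability of an event under a probability mass function. -/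
noncomputable def pr {α : Type} [Fintype α] (Q : ProbMass α) (A : Set α) : ℝ :=
  ∑ a, A.indicator Q.mass a

/-- Expectation of a real-valued function under a probability mass function. -/
noncomputable def expect {α : Type} [Fintype α] (Q : ProbMass α) (f : α → ℝ) : ℝ :=
  ∑ a, Q.mass a * f a

/-- The latent space: potential outcomes `(Y_d)_{d ∈ D}` taking values in the finite set
`𝒴 ⊂ ℝ`, potential treatments `(D_z)_{z ∈ Z}`, and the instrument `Z`. -/
abbrev Latent (𝒴 : Finset ℝ) (D Z : Type) : Type := (D → ↥𝒴) × (Z → D) × Z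

/-- The observed space: `(Y, D, Z)`. -/
abbrev Obs (𝒴 : Finset ℝ) (D Z : Type) : Type := ↥𝒴 × D × Z

variable {𝒴 : Finset ℝ} {D Z : Type} [Fintype D] [DecidableEq D] [Fintype Z] [DecidableEq Z]

/-- The map `T` sending `((y_d), (d_z), z)` to `(y_{d_z}, d_z, z)`. -/
def Tmap (ω : Latent 𝒴 D Z) : Obs 𝒴 D Z := (ω.1 (ω.2.1 ω.2.2), ω.2.1 ω.2.2, ω.2.2)

/-- `Q` rationalizes `P`: `P = Q ∘ T⁻¹`. -/
def Rationalizes (Q : ProbMass (Latent 𝒴 D Z)) (P : ProbMass (Obs 𝒴 D Z)) : Prop :=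
  ∀ o : Obs 𝒴 D Z, P.mass o = pr Q {ω | Tmap ω = o}

/-- Instrument exogeneity: `((Y_d), (D_z))` is independent of `Z` under `Q`. -/
def Exog (Q : ProbMass (Latent 𝒴 D Z)) : Prop :=
  ∀ (yd : D → ↥𝒴) (dz : Z → D) (z : Z),
    pr Q {ω | ω.1 = yd ∧ ω.2.1 = dz ∧ ω.2.2 = z}
      = pr Q {ω | ω.1 = yd ∧ ω.2.1 = dz} * pr Q {ω | ω.2.2 = z}

/-- `zs` maximally encourages treatment `d` under `Q`:
`Q{D_{zs} ≠ d and D_{z'} = d for some z'} = 0`. -/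
def MaxEnc (Q : ProbMass (Latent 𝒴 D Z)) (d : D) (zs : Z) : Prop :=
  pr Q {ω | ω.2.1 zs ≠ d ∧ ∃ z' : Z, ω.2.1 z' = d} = 0

/-- Generalized monotonicity. -/
def GenMono (Q : ProbMass (Latent 𝒴 D Z)) : Prop :=
  ∀ d : D, ∃ zs : Z, MaxEnc Q d zs

/-- `θ(Q) = (E_Q[Y_d])_{d ∈ D}`, the vector of average potential outcomes. -/
noncomputable def theta (Q : ProbMass (Latent 𝒴 D Z)) : D → ℝ :=
  fun d => expect Q fun ω => (ω.1 d : ℝ)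

/-- `𝐐₀(P, 𝐐)`: the set of `Q ∈ 𝐐` that rationalize `P`. -/
def Q0 (P : ProbMass (Obs 𝒴 D Z)) (QQ : Set (ProbMass (Latent 𝒴 D Z))) :
    Set (ProbMass (Latent 𝒴 D Z)) :=
  {Q | Q ∈ QQ ∧ Rationalizes Q P}

/-- `Θ₀(P, 𝐐)`: the identified set for `θ(Q)`. -/
noncomputable def Theta0 (P : ProbMass (Obs 𝒴 D Z))
    (QQ : Set (ProbMass (Latent 𝒴 D Z))) : Set (D → ℝ) :=
  theta '' Q0 P QQ

/-- Unrestricted potential outcomes: if `Q ∈ 𝐐`, `Q'` is exogenous, and the potential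
treatments have the same distribution under `Q'` as under `Q`, then `Q' ∈ 𝐐`. -/
def UnrestrictedPO (QQ : Set (ProbMass (Latent 𝒴 D Z))) : Prop :=
  ∀ Q ∈ QQ, ∀ Q' : ProbMass (Latent 𝒴 D Z), Exog Q' →
    (∀ dz : Z → D, pr Q' {ω | ω.2.1 = dz} = pr Q {ω | ω.2.1 = dz}) → Q' ∈ QQ

/-- `P{Z = z}`. -/
noncomputable def prZ (P : ProbMass (Obs 𝒴 D Z)) (z : Z) : ℝ :=
  pr P {o | o.2.2 = z}

/-- `P{D = d ∣ Z = z}`. -/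
noncomputable def condD (P : ProbMass (Obs 𝒴 D Z)) (d : D) (z : Z) : ℝ :=
  pr P {o | o.2.1 = d ∧ o.2.2 = z} / prZ P z

/-- `p_{yd|z} = P{Y = y, D = d ∣ Z = z}`. -/
noncomputable def pObs (P : ProbMass (Obs 𝒴 D Z)) (y : ℝ) (d : D) (z : Z) : ℝ :=
  pr P {o | (o.1 : ℝ) = y ∧ o.2.1 = d ∧ o.2.2 = z} / prZ P z

/-- `β_{d|z} = E_P[Y · 1{D = d} ∣ Z = z]`. -/
noncomputable def betaObs (P : ProbMass (Obs 𝒴 D Z)) (d : D) (z : Z) : ℝ :=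
  (expect P fun o => if o.2.1 = d ∧ o.2.2 = z then (o.1 : ℝ) else 0) / prZ P z

set_option linter.unusedSectionVars false

section AuxGeneric
variable {α β γ : Type} [Fintype α] [Fintype β] [Fintype γ]

lemma pr_eq_sum (Q : ProbMass α) (A : Set α) [DecidablePred (· ∈ A)] :
    pr Q A = ∑ a, if a ∈ A then Q.mass a else 0 := by
  unfold pr; congr 1; ext a; exact Set.indicator_apply _ _ _

lemma pr_nonneg (Q : ProbMass α) (A : Set α) : 0 ≤ pr Q A := by
  classical
  rw [pr_eq_sum]
  exact Finset.sum_nonneg fun a _ => by split <;> simp [Q.nonneg]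

lemma mass_eq_zero_of_pr (Q : ProbMass α) {A : Set α}
    (h : pr Q A = 0) {a : α} (ha : a ∈ A) : Q.mass a = 0 := by
  classical
  rw [pr_eq_sum] at h
  have := (Finset.sum_eq_zero_iff_of_nonneg
    (fun a _ => by split <;> simp [Q.nonneg])).mp h a (mem_univ a)
  simpa [ha] using this

lemma sum_triple (f : α × β × γ → ℝ) :
    ∑ x : α × β × γ, f x = ∑ a, ∑ b, ∑ c, f (a, b, c) := by
  rw [Fintype.sum_prod_type]
  exact Finset.sum_congr rfl fun a _ => by rw [Fintype.sum_prod_type]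

variable [DecidableEq α] [DecidableEq β] [DecidableEq γ]

lemma pr_atom (Q : ProbMass (α × β × γ)) (a : α) (b : β) (c : γ) :
    pr Q {x | x.1 = a ∧ x.2.1 = b ∧ x.2.2 = c} = Q.mass (a, b, c) := by
  classical
  rw [pr_eq_sum, sum_triple]
  rw [Fintype.sum_eq_single a, Fintype.sum_eq_single b, Fintype.sum_eq_single c]
  · rw [if_pos ⟨rfl, rfl, rfl⟩]
  · intro c' hc; rw [if_neg]; rintro ⟨-, -, h⟩; exact hc h
  · intro b' hb; apply Finset.sum_eq_zero; intro c' _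
    rw [if_neg]; rintro ⟨-, h, -⟩; exact hb h
  · intro a' ha; apply Finset.sum_eq_zero; intro b' _; apply Finset.sum_eq_zero; intro c' _
    rw [if_neg]; rintro ⟨h, -, -⟩; exact ha h

lemma pr_12 (Q : ProbMass (α × β × γ)) (a : α) (b : β) :
    pr Q {x | x.1 = a ∧ x.2.1 = b} = ∑ c, Q.mass (a, b, c) := by
  classical
  rw [pr_eq_sum, sum_triple]
  rw [Fintype.sum_eq_single a, Fintype.sum_eq_single b]
  · exact Finset.sum_congr rfl fun c _ => if_pos ⟨rfl, rfl⟩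
  · intro b' hb; apply Finset.sum_eq_zero; intro c' _
    rw [if_neg]; rintro ⟨-, h⟩; exact hb h
  · intro a' ha; apply Finset.sum_eq_zero; intro b' _; apply Finset.sum_eq_zero; intro c' _
    rw [if_neg]; rintro ⟨h, -⟩; exact ha h

lemma pr_3 (Q : ProbMass (α × β × γ)) (c : γ) :
    pr Q {x | x.2.2 = c} = ∑ a, ∑ b, Q.mass (a, b, c) := by
  classical
  rw [pr_eq_sum, sum_triple]
  refine Finset.sum_congr rfl fun a _ => Finset.sum_congr rfl fun b _ => ?_
  rw [Fintype.sum_eq_single c]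
  · exact if_pos rfl
  · intro c' hc; exact if_neg hc

lemma pr_2 (Q : ProbMass (α × β × γ)) (b : β) :
    pr Q {x | x.2.1 = b} = ∑ a, ∑ c, Q.mass (a, b, c) := by
  classical
  rw [pr_eq_sum, sum_triple]
  refine Finset.sum_congr rfl fun a _ => ?_
  rw [Fintype.sum_eq_single b]
  · exact Finset.sum_congr rfl fun c _ => if_pos rfl
  · intro b' hb; apply Finset.sum_eq_zero; intro c' _; exact if_neg hb

lemma total_triple (Q : ProbMass (α × β × γ)) :
    ∑ a, ∑ b, ∑ c, Q.mass (a, b, c) = 1 := by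
  rw [← sum_triple]; exact Q.total

end AuxGeneric

section AuxLatent
variable {𝒴 : Finset ℝ} {D Z : Type} [Fintype D] [DecidableEq D] [Fintype Z] [DecidableEq Z]

/-- Change of variables along `Tmap` for a rationalizing `Q`. -/
lemma rat_sum {Q : ProbMass (Latent 𝒴 D Z)} {P : ProbMass (Obs 𝒴 D Z)}
    (hR : Rationalizes Q P) (f : Obs 𝒴 D Z → ℝ) :
    ∑ o, P.mass o * f o = ∑ ω, Q.mass ω * f (Tmap ω) := by
  classical
  have h1 : ∀ o : Obs 𝒴 D Z, P.mass o * f o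
      = ∑ ω : Latent 𝒴 D Z, (if Tmap ω = o then Q.mass ω * f o else 0) := by
    intro o
    rw [hR o, pr_eq_sum, Finset.sum_mul]
    refine Finset.sum_congr rfl fun ω _ => ?_
    simp only [Set.mem_setOf_eq]
    by_cases h : Tmap ω = o
    · rw [if_pos h, if_pos h]
    · rw [if_neg h, if_neg h, zero_mul]
  calc ∑ o, P.mass o * f o
      = ∑ o, ∑ ω : Latent 𝒴 D Z, (if Tmap ω = o then Q.mass ω * f o else 0) :=
        Finset.sum_congr rfl fun o _ => h1 o
    _ = ∑ ω : Latent 𝒴 D Z, ∑ o, (if Tmap ω = o then Q.mass ω * f o else 0) :=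
        Finset.sum_comm
    _ = ∑ ω, Q.mass ω * f (Tmap ω) := by
        refine Finset.sum_congr rfl fun ω _ => ?_
        rw [Fintype.sum_eq_single (Tmap ω)]
        · exact if_pos rfl
        · intro o ho; exact if_neg fun h => ho h.symm

/-- mass-level form of exogeneity. -/
lemma exog_mass {Q : ProbMass (Latent 𝒴 D Z)} (hE : Exog Q) (yd : D → ↥𝒴) (dz : Z → D) (z : Z) :
    Q.mass (yd, dz, z) = (∑ z', Q.mass (yd, dz, z')) * (∑ yd', ∑ dz', Q.mass (yd', dz', z)) := by
  have := hE yd dz z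
  rwa [pr_atom, pr_12, pr_3] at this

lemma exog_sum {Q : ProbMass (Latent 𝒴 D Z)} (hE : Exog Q) (z : Z)
    (g : (D → ↥𝒴) → (Z → D) → ℝ) :
    ∑ ω : Latent 𝒴 D Z, Q.mass ω * (if ω.2.2 = z then g ω.1 ω.2.1 else 0)
      = (∑ ω : Latent 𝒴 D Z, Q.mass ω * g ω.1 ω.2.1)
        * (∑ yd, ∑ dz, Q.mass (yd, dz, z)) := by
  classical
  rw [sum_triple (fun ω : Latent 𝒴 D Z => Q.mass ω * (if ω.2.2 = z then g ω.1 ω.2.1 else 0)),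
    sum_triple (fun ω : Latent 𝒴 D Z => Q.mass ω * g ω.1 ω.2.1), Finset.sum_mul]
  refine Finset.sum_congr rfl fun yd _ => ?_
  rw [Finset.sum_mul]
  refine Finset.sum_congr rfl fun dz _ => ?_
  have hL : ∑ z', Q.mass (yd, dz, z') * (if z' = z then g yd dz else 0)
      = Q.mass (yd, dz, z) * g yd dz := by
    rw [Fintype.sum_eq_single z]
    · rw [if_pos rfl]
    · intro z' hz; rw [if_neg hz, mul_zero]
  calc ∑ z', Q.mass (yd, dz, z') * (if (yd, dz, z').2.2 = z then g yd dz else 0)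
      = Q.mass (yd, dz, z) * g yd dz := hL
    _ = ((∑ z', Q.mass (yd, dz, z')) * (∑ yd', ∑ dz', Q.mass (yd', dz', z))) * g yd dz := by
        rw [← exog_mass hE]
    _ = ((∑ z', Q.mass (yd, dz, z')) * g yd dz) * (∑ yd', ∑ dz', Q.mass (yd', dz', z)) := by
        ring
    _ = (∑ z', Q.mass (yd, dz, z') * g yd dz) * (∑ yd', ∑ dz', Q.mass (yd', dz', z)) := by
        rw [Finset.sum_mul]

/-- `Q{Z = z} = P{Z = z}` for a rationalizing `Q`. -/
lemma ratZ {Q : ProbMass (Latent 𝒴 D Z)} {P : ProbMass (Obs 𝒴 D Z)}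
    (hR : Rationalizes Q P) (z : Z) :
    (∑ yd, ∑ dz, Q.mass (yd, dz, z)) = prZ P z := by
  classical
  have h := rat_sum hR (fun o => if o.2.2 = z then 1 else 0)
  have hL : ∑ o : Obs 𝒴 D Z, P.mass o * (if o.2.2 = z then 1 else 0) = prZ P z := by
    rw [prZ, pr_3, sum_triple (fun o : Obs 𝒴 D Z => P.mass o * (if o.2.2 = z then 1 else 0))]
    refine Finset.sum_congr rfl fun y _ => Finset.sum_congr rfl fun d _ => ?_
    rw [Fintype.sum_eq_single z]
    · rw [if_pos rfl, mul_one]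
    · intro z' hz; rw [if_neg hz, mul_zero]
  have hRt : ∑ ω : Latent 𝒴 D Z, Q.mass ω * (if (Tmap ω).2.2 = z then 1 else 0)
      = ∑ yd, ∑ dz, Q.mass (yd, dz, z) := by
    rw [sum_triple (fun ω : Latent 𝒴 D Z => Q.mass ω * (if (Tmap ω).2.2 = z then 1 else 0))]
    change ∑ yd : D → ↥𝒴, ∑ dz : Z → D, ∑ z' : Z, Q.mass (yd, dz, z') * (if z' = z then (1:ℝ) else 0) = _
    refine Finset.sum_congr rfl fun yd _ => Finset.sum_congr rfl fun dz _ => ?_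
    rw [Fintype.sum_eq_single z]
    · rw [if_pos rfl, mul_one]
    · intro z' hz; rw [if_neg hz, mul_zero]
  rw [hL, hRt] at h
  exact h.symm

/-- Key identity: for exogenous rationalizing `Q`,
`E_Q[f(Y_d) 1{D_z = d}] ⋅ P{Z=z} = E_P[f(Y) 1{D=d, Z=z}]`. -/
lemma key {Q : ProbMass (Latent 𝒴 D Z)} {P : ProbMass (Obs 𝒴 D Z)}
    (hE : Exog Q) (hR : Rationalizes Q P) (d : D) (z : Z) (f : ↥𝒴 → ℝ) :
    (∑ ω : Latent 𝒴 D Z, Q.mass ω * (if ω.2.1 z = d then f (ω.1 d) else 0)) * prZ P z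
      = ∑ o : Obs 𝒴 D Z, P.mass o * (if o.2.1 = d ∧ o.2.2 = z then f o.1 else 0) := by
  classical
  have h := rat_sum hR (fun o => if o.2.1 = d ∧ o.2.2 = z then f o.1 else 0)
  rw [h]
  have h2 : ∀ ω : Latent 𝒴 D Z,
      Q.mass ω * (if (Tmap ω).2.1 = d ∧ (Tmap ω).2.2 = z then f (Tmap ω).1 else 0)
      = Q.mass ω * (if ω.2.2 = z then (if ω.2.1 z = d then f (ω.1 d) else 0) else 0) := by
    intro ω
    change Q.mass ω * (if ω.2.1 ω.2.2 = d ∧ ω.2.2 = z then f (ω.1 (ω.2.1 ω.2.2)) else 0) = _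
    by_cases hz : ω.2.2 = z
    · by_cases hd : ω.2.1 z = d
      · rw [if_pos hz, if_pos hd, if_pos]
        · rw [hz, hd]
        · rw [hz]; exact ⟨hd, rfl⟩
      · rw [if_pos hz, if_neg hd, if_neg]
        rintro ⟨h1, -⟩
        rw [hz] at h1
        exact hd h1
    · rw [if_neg hz, if_neg]
      rintro ⟨-, h2⟩
      exact hz h2
  rw [Finset.sum_congr rfl fun ω _ => h2 ω, exog_sum hE z
    (fun yd dz => if dz z = d then f (yd d) else 0), ratZ hR]

end AuxLatent

set_option maxHeartbeats 1000000

section Construction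
variable {𝒴 : Finset ℝ} {D Z : Type} [Fintype D] [DecidableEq D] [Fintype Z] [DecidableEq Z]

lemma sum_ite_collapse {β : Type} [Fintype β] [DecidableEq β] (b : β) (f : β → ℝ) :
    ∑ y, (if y = b then f y else 0) = f b := by
  rw [Fintype.sum_eq_single b]
  · exact if_pos rfl
  · intro y hy; exact if_neg hy

lemma sum_ite_collapse' {β : Type} [Fintype β] [DecidableEq β] (b : β) (f : β → ℝ) :
    ∑ y, (if b = y then f y else 0) = f b := by
  rw [Fintype.sum_eq_single b]
  · exact if_pos rfl
  · intro y hy; exact if_neg fun h => hy h.symm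

/-- Marginal distribution of potential treatments. -/
noncomputable def muOf (Q₀ : ProbMass (Latent 𝒴 D Z)) (dz : Z → D) : ℝ :=
  ∑ yd, ∑ z, Q₀.mass (yd, dz, z)

/-- `Q₀{Y_d = y, (D_z) = dz}`. -/
noncomputable def wnum (Q₀ : ProbMass (Latent 𝒴 D Z)) (d : D) (dz : Z → D) (y : ↥𝒴) : ℝ :=
  ∑ yd, ∑ z, if yd d = y then Q₀.mass (yd, dz, z) else 0

/-- `E_Q₀[Y_d 1{(D_z) = dz}]`. -/
noncomputable def wmean (Q₀ : ProbMass (Latent 𝒴 D Z)) (d : D) (dz : Z → D) : ℝ :=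
  ∑ yd, ∑ z, Q₀.mass (yd, dz, z) * (yd d : ℝ)

lemma muOf_nonneg (Q₀ : ProbMass (Latent 𝒴 D Z)) (dz : Z → D) : 0 ≤ muOf Q₀ dz :=
  Finset.sum_nonneg fun _ _ => Finset.sum_nonneg fun _ _ => Q₀.nonneg _

lemma wnum_nonneg (Q₀ : ProbMass (Latent 𝒴 D Z)) (d : D) (dz : Z → D) (y : ↥𝒴) :
    0 ≤ wnum Q₀ d dz y :=
  Finset.sum_nonneg fun _ _ => Finset.sum_nonneg fun _ _ => by
    split
    · exact Q₀.nonneg _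
    · exact le_refl 0

lemma mass_zero_of_muOf {Q₀ : ProbMass (Latent 𝒴 D Z)} {dz : Z → D} (h : muOf Q₀ dz = 0)
    (yd : D → ↥𝒴) (z : Z) : Q₀.mass (yd, dz, z) = 0 := by
  have h1 := (Finset.sum_eq_zero_iff_of_nonneg
    (fun yd _ => Finset.sum_nonneg fun z _ => Q₀.nonneg ((yd, dz, z) : Latent 𝒴 D Z))).mp h yd
    (Finset.mem_univ yd)
  exact (Finset.sum_eq_zero_iff_of_nonneg fun z _ => Q₀.nonneg _).mp h1 z (Finset.mem_univ z)

lemma wnum_eq_zero {Q₀ : ProbMass (Latent 𝒴 D Z)} {dz : Z → D} (h : muOf Q₀ dz = 0)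
    (d : D) (y : ↥𝒴) : wnum Q₀ d dz y = 0 := by
  refine Finset.sum_eq_zero fun yd _ => Finset.sum_eq_zero fun z _ => ?_
  rw [mass_zero_of_muOf h]
  split <;> rfl

lemma sum_muOf (Q₀ : ProbMass (Latent 𝒴 D Z)) : ∑ dz : Z → D, muOf Q₀ dz = 1 := by
  unfold muOf
  rw [Finset.sum_comm]
  exact total_triple Q₀

lemma sum_wnum (Q₀ : ProbMass (Latent 𝒴 D Z)) (d : D) (dz : Z → D) :
    ∑ y, wnum Q₀ d dz y = muOf Q₀ dz := by
  unfold wnum muOf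
  rw [Finset.sum_comm]
  refine Finset.sum_congr rfl fun yd _ => ?_
  rw [Finset.sum_comm]
  refine Finset.sum_congr rfl fun z _ => ?_
  exact sum_ite_collapse' (yd d) _

lemma sum_wnum_mul (Q₀ : ProbMass (Latent 𝒴 D Z)) (d : D) (dz : Z → D) :
    ∑ y : ↥𝒴, wnum Q₀ d dz y * (y : ℝ) = wmean Q₀ d dz := by
  unfold wnum wmean
  calc ∑ y : ↥𝒴, (∑ yd, ∑ z, if yd d = y then Q₀.mass (yd, dz, z) else 0) * (y : ℝ)
      = ∑ y : ↥𝒴, ∑ yd, ∑ z, (if yd d = y then Q₀.mass (yd, dz, z) * (y : ℝ) else 0) := by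
        refine Finset.sum_congr rfl fun y _ => ?_
        rw [Finset.sum_mul]
        refine Finset.sum_congr rfl fun yd _ => ?_
        rw [Finset.sum_mul]
        refine Finset.sum_congr rfl fun z _ => ?_
        split
        · rfl
        · rw [zero_mul]
    _ = ∑ yd, ∑ y : ↥𝒴, ∑ z, (if yd d = y then Q₀.mass (yd, dz, z) * (y : ℝ) else 0) :=
        Finset.sum_comm
    _ = ∑ yd, ∑ z, Q₀.mass (yd, dz, z) * (yd d : ℝ) := by
        refine Finset.sum_congr rfl fun yd _ => ?_
        rw [Finset.sum_comm]
        refine Finset.sum_congr rfl fun z _ => ?_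
        exact sum_ite_collapse' (yd d) (fun y : ↥𝒴 => Q₀.mass (yd, dz, z) * (y : ℝ))

/-- Conditional outcome distribution used in the construction. -/
noncomputable def nuC (Q₀ : ProbMass (Latent 𝒴 D Z)) (alpha : D → ℝ) (ym yM : ↥𝒴)
    (d : D) (dz : Z → D) (y : ↥𝒴) : ℝ :=
  if ∃ z', dz z' = d then
    wnum Q₀ d dz y / muOf Q₀ dz + (if muOf Q₀ dz = 0 then (if y = ym then 1 else 0) else 0)
  else alpha d * (if y = yM then 1 else 0) + (1 - alpha d) * (if y = ym then 1 else 0)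

lemma nuC_nonneg (Q₀ : ProbMass (Latent 𝒴 D Z)) {alpha : D → ℝ} (ym yM : ↥𝒴)
    {d : D} (h0 : 0 ≤ alpha d) (h1 : alpha d ≤ 1) (dz : Z → D) (y : ↥𝒴) :
    0 ≤ nuC Q₀ alpha ym yM d dz y := by
  unfold nuC
  split
  · refine add_nonneg (div_nonneg (wnum_nonneg _ _ _ _) (muOf_nonneg _ _)) ?_
    split
    · split
      · exact zero_le_one
      · exact le_refl 0
    · exact le_refl 0
  · refine add_nonneg (mul_nonneg h0 ?_) (mul_nonneg (by linarith) ?_) <;>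
      · split
        · exact zero_le_one
        · exact le_refl 0

lemma sum_nuC (Q₀ : ProbMass (Latent 𝒴 D Z)) (alpha : D → ℝ) (ym yM : ↥𝒴)
    (d : D) (dz : Z → D) : ∑ y, nuC Q₀ alpha ym yM d dz y = 1 := by
  unfold nuC
  split
  · rw [Finset.sum_add_distrib, ← Finset.sum_div, sum_wnum]
    by_cases hmu : muOf Q₀ dz = 0
    · rw [Finset.sum_congr rfl fun (y : ↥𝒴) (_ : y ∈ Finset.univ) =>
        (if_pos hmu : (if muOf Q₀ dz = 0 then (if y = ym then (1:ℝ) else 0) else 0)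
          = (if y = ym then (1:ℝ) else 0))]
      rw [sum_ite_collapse ym (fun _ => (1 : ℝ)), hmu, zero_div, zero_add]
    · rw [div_self hmu]
      rw [Finset.sum_congr rfl fun (y : ↥𝒴) (_ : y ∈ Finset.univ) => if_neg hmu]
      rw [Finset.sum_const_zero, add_zero]
  · rw [Finset.sum_add_distrib, ← Finset.mul_sum, ← Finset.mul_sum,
      sum_ite_collapse yM (fun _ => (1 : ℝ)), sum_ite_collapse ym (fun _ => (1 : ℝ))]
    ring

lemma muOf_mul_nuC (Q₀ : ProbMass (Latent 𝒴 D Z)) (alpha : D → ℝ) (ym yM : ↥𝒴)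
    {d : D} {dz : Z → D} (h : ∃ z', dz z' = d) (y : ↥𝒴) :
    muOf Q₀ dz * nuC Q₀ alpha ym yM d dz y = wnum Q₀ d dz y := by
  unfold nuC
  rw [if_pos h]
  by_cases hmu : muOf Q₀ dz = 0
  · rw [hmu, zero_mul, wnum_eq_zero hmu]
  · rw [if_neg hmu, add_zero, mul_div_cancel₀ _ hmu]

lemma muOf_mul_nuC_mean (Q₀ : ProbMass (Latent 𝒴 D Z)) (alpha : D → ℝ) (ym yM : ↥𝒴)
    {d : D} {dz : Z → D} (h : ∃ z', dz z' = d) :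
    muOf Q₀ dz * (∑ y : ↥𝒴, nuC Q₀ alpha ym yM d dz y * (y : ℝ)) = wmean Q₀ d dz := by
  rw [Finset.mul_sum]
  calc ∑ y : ↥𝒴, muOf Q₀ dz * (nuC Q₀ alpha ym yM d dz y * (y : ℝ))
      = ∑ y : ↥𝒴, wnum Q₀ d dz y * (y : ℝ) := by
        refine Finset.sum_congr rfl fun y _ => ?_
        rw [← mul_assoc, muOf_mul_nuC Q₀ alpha ym yM h]
    _ = wmean Q₀ d dz := sum_wnum_mul Q₀ d dz

lemma nuC_mean_out (Q₀ : ProbMass (Latent 𝒴 D Z)) (alpha : D → ℝ) (ym yM : ↥𝒴)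
    {d : D} {dz : Z → D} (h : ¬ ∃ z', dz z' = d) :
    ∑ y : ↥𝒴, nuC Q₀ alpha ym yM d dz y * (y : ℝ)
      = alpha d * (yM : ℝ) + (1 - alpha d) * (ym : ℝ) := by
  unfold nuC
  simp only [if_neg h]
  have hterm : ∀ y : ↥𝒴,
      (alpha d * (if y = yM then 1 else 0) + (1 - alpha d) * (if y = ym then 1 else 0)) * (y : ℝ)
      = (if y = yM then alpha d * (yM : ℝ) else 0)
        + (if y = ym then (1 - alpha d) * (ym : ℝ) else 0) := by
    intro y
    by_cases h1 : y = yM <;> by_cases h2 : y = ym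
    · rw [if_pos h1, if_pos h2, if_pos h1, if_pos h2, ← h1, ← h2]; ring
    · rw [if_pos h1, if_neg h2, if_pos h1, if_neg h2, ← h1]; ring
    · rw [if_neg h1, if_pos h2, if_neg h1, if_pos h2, ← h2]; ring
    · rw [if_neg h1, if_neg h2, if_neg h1, if_neg h2]; ring
  rw [Finset.sum_congr rfl fun y _ => hterm y, Finset.sum_add_distrib,
    sum_ite_collapse yM (fun _ => alpha d * (yM : ℝ)),
    sum_ite_collapse ym (fun _ => (1 - alpha d) * (ym : ℝ))]

/-- Factorization over independent coordinates. -/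
lemma sum_pi_weight (g : D → ↥𝒴 → ℝ) (d : D) (h : ∀ d' ≠ d, ∑ y' : ↥𝒴, g d' y' = 1)
    (v : ↥𝒴 → ℝ) :
    ∑ yd : D → ↥𝒴, (∏ d', g d' (yd d')) * v (yd d) = ∑ y : ↥𝒴, g d y * v y := by
  classical
  have hterm : ∀ yd : D → ↥𝒴, (∏ d', g d' (yd d')) * v (yd d)
      = ∏ d', (if d' = d then g d (yd d') * v (yd d') else g d' (yd d')) := by
    intro yd
    rw [← Finset.mul_prod_erase Finset.univ
      (fun d' => if d' = d then g d (yd d') * v (yd d') else g d' (yd d')) (Finset.mem_univ d),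
      ← Finset.mul_prod_erase Finset.univ (fun d' => g d' (yd d')) (Finset.mem_univ d),
      if_pos rfl]
    rw [Finset.prod_congr rfl (fun x hx => if_neg (Finset.mem_erase.mp hx).1)]
    ring
  calc ∑ yd : D → ↥𝒴, (∏ d', g d' (yd d')) * v (yd d)
      = ∑ yd : D → ↥𝒴, ∏ d', (if d' = d then g d (yd d') * v (yd d') else g d' (yd d')) :=
        Finset.sum_congr rfl fun yd _ => hterm yd
    _ = ∏ d', ∑ y : ↥𝒴, (if d' = d then g d y * v y else g d' y) :=
        (Fintype.prod_sum fun d' (y : ↥𝒴) => if d' = d then g d y * v y else g d' y).symm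
    _ = ∑ y : ↥𝒴, g d y * v y := by
        rw [Finset.prod_eq_single d]
        · exact Finset.sum_congr rfl fun y _ => if_pos rfl
        · intro d' _ hd'
          calc ∑ y : ↥𝒴, (if d' = d then g d y * v y else g d' y)
              = ∑ y : ↥𝒴, g d' y := Finset.sum_congr rfl fun y _ => if_neg hd'
            _ = 1 := h d' hd'
        · intro hd; exact absurd (Finset.mem_univ d) hd

lemma sum_pi_nuC (Q₀ : ProbMass (Latent 𝒴 D Z)) (alpha : D → ℝ) (ym yM : ↥𝒴) (dz : Z → D) :
    ∑ yd : D → ↥𝒴, ∏ d', nuC Q₀ alpha ym yM d' dz (yd d') = 1 := by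
  calc ∑ yd : D → ↥𝒴, ∏ d', nuC Q₀ alpha ym yM d' dz (yd d')
      = ∏ d', ∑ y : ↥𝒴, nuC Q₀ alpha ym yM d' dz y :=
        (Fintype.prod_sum fun d' (y : ↥𝒴) => nuC Q₀ alpha ym yM d' dz y).symm
    _ = 1 := Finset.prod_eq_one fun d' _ => sum_nuC Q₀ alpha ym yM d' dz

/-- The constructed latent mass function. -/
noncomputable def QmassF (P : ProbMass (Obs 𝒴 D Z)) (Q₀ : ProbMass (Latent 𝒴 D Z))
    (alpha : D → ℝ) (ym yM : ↥𝒴) : Latent 𝒴 D Z → ℝ :=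
  fun ω => prZ P ω.2.2 * muOf Q₀ ω.2.1 * ∏ d, nuC Q₀ alpha ym yM d ω.2.1 (ω.1 d)

lemma QmassF_apply (P : ProbMass (Obs 𝒴 D Z)) (Q₀ : ProbMass (Latent 𝒴 D Z))
    (alpha : D → ℝ) (ym yM : ↥𝒴) (yd : D → ↥𝒴) (dz : Z → D) (z : Z) :
    QmassF P Q₀ alpha ym yM (yd, dz, z)
      = prZ P z * muOf Q₀ dz * ∏ d, nuC Q₀ alpha ym yM d dz (yd d) := rfl

lemma sum_prZ (P : ProbMass (Obs 𝒴 D Z)) : ∑ z, prZ P z = 1 := by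
  unfold prZ
  calc ∑ z, pr P {o | o.2.2 = z} = ∑ z, ∑ y, ∑ d, P.mass (y, d, z) :=
        Finset.sum_congr rfl fun z _ => pr_3 P z
    _ = ∑ y, ∑ z, ∑ d, P.mass (y, d, z) := Finset.sum_comm
    _ = ∑ y, ∑ d, ∑ z, P.mass (y, d, z) :=
        Finset.sum_congr rfl fun y _ => Finset.sum_comm
    _ = 1 := total_triple P

lemma QmassF_sum_z (P : ProbMass (Obs 𝒴 D Z)) (Q₀ : ProbMass (Latent 𝒴 D Z))
    (alpha : D → ℝ) (ym yM : ↥𝒴) (yd : D → ↥𝒴) (dz : Z → D) :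
    ∑ z : Z, QmassF P Q₀ alpha ym yM (yd, dz, z)
      = muOf Q₀ dz * ∏ d, nuC Q₀ alpha ym yM d dz (yd d) := by
  calc ∑ z : Z, QmassF P Q₀ alpha ym yM (yd, dz, z)
      = ∑ z, prZ P z * (muOf Q₀ dz * ∏ d, nuC Q₀ alpha ym yM d dz (yd d)) := by
        refine Finset.sum_congr rfl fun z _ => ?_
        rw [QmassF_apply, mul_assoc]
    _ = (∑ z, prZ P z) * (muOf Q₀ dz * ∏ d, nuC Q₀ alpha ym yM d dz (yd d)) :=
        (Finset.sum_mul _ _ _).symm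
    _ = muOf Q₀ dz * ∏ d, nuC Q₀ alpha ym yM d dz (yd d) := by rw [sum_prZ, one_mul]

lemma QmassF_sum_yd_dz (P : ProbMass (Obs 𝒴 D Z)) (Q₀ : ProbMass (Latent 𝒴 D Z))
    (alpha : D → ℝ) (ym yM : ↥𝒴) (z : Z) :
    ∑ yd : D → ↥𝒴, ∑ dz : Z → D, QmassF P Q₀ alpha ym yM (yd, dz, z) = prZ P z := by
  rw [Finset.sum_comm]
  calc ∑ dz : Z → D, ∑ yd : D → ↥𝒴, QmassF P Q₀ alpha ym yM (yd, dz, z)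
      = ∑ dz : Z → D, prZ P z * muOf Q₀ dz := by
        refine Finset.sum_congr rfl fun dz _ => ?_
        calc ∑ yd : D → ↥𝒴, QmassF P Q₀ alpha ym yM (yd, dz, z)
            = ∑ yd : D → ↥𝒴, (prZ P z * muOf Q₀ dz) * ∏ d, nuC Q₀ alpha ym yM d dz (yd d) :=
              Finset.sum_congr rfl fun yd _ => QmassF_apply P Q₀ alpha ym yM yd dz z
          _ = (prZ P z * muOf Q₀ dz) * ∑ yd : D → ↥𝒴, ∏ d, nuC Q₀ alpha ym yM d dz (yd d) :=
              (Finset.mul_sum _ _ _).symm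
          _ = prZ P z * muOf Q₀ dz := by rw [sum_pi_nuC, mul_one]
    _ = prZ P z * ∑ dz : Z → D, muOf Q₀ dz := (Finset.mul_sum _ _ _).symm
    _ = prZ P z := by rw [sum_muOf, mul_one]

lemma QmassF_nonneg (P : ProbMass (Obs 𝒴 D Z)) (Q₀ : ProbMass (Latent 𝒴 D Z))
    {alpha : D → ℝ} (ym yM : ↥𝒴) (halpha : ∀ d, 0 ≤ alpha d ∧ alpha d ≤ 1)
    (ω : Latent 𝒴 D Z) : 0 ≤ QmassF P Q₀ alpha ym yM ω := by
  refine mul_nonneg (mul_nonneg (pr_nonneg _ _) (muOf_nonneg _ _)) ?_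
  exact Finset.prod_nonneg fun d _ =>
    nuC_nonneg Q₀ ym yM (halpha d).1 (halpha d).2 _ _

lemma QmassF_total (P : ProbMass (Obs 𝒴 D Z)) (Q₀ : ProbMass (Latent 𝒴 D Z))
    (alpha : D → ℝ) (ym yM : ↥𝒴) :
    ∑ ω : Latent 𝒴 D Z, QmassF P Q₀ alpha ym yM ω = 1 := by
  rw [sum_triple (QmassF P Q₀ alpha ym yM)]
  calc ∑ yd, ∑ dz, ∑ z : Z, QmassF P Q₀ alpha ym yM (yd, dz, z)
      = ∑ yd : D → ↥𝒴, ∑ dz : Z → D, muOf Q₀ dz * ∏ d, nuC Q₀ alpha ym yM d dz (yd d) :=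
        Finset.sum_congr rfl fun yd _ => Finset.sum_congr rfl fun dz _ =>
          QmassF_sum_z P Q₀ alpha ym yM yd dz
    _ = ∑ dz : Z → D, ∑ yd : D → ↥𝒴, muOf Q₀ dz * ∏ d, nuC Q₀ alpha ym yM d dz (yd d) := Finset.sum_comm
    _ = ∑ dz : Z → D, muOf Q₀ dz := by
        refine Finset.sum_congr rfl fun dz _ => ?_
        rw [← Finset.mul_sum, sum_pi_nuC, mul_one]
    _ = 1 := sum_muOf Q₀

end Construction

section Engine
variable {𝒴 : Finset ℝ} {D Z : Type} [Fintype D] [DecidableEq D] [Fintype Z] [DecidableEq Z]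

/-- The constructed latent probability measure. -/
noncomputable def Qprime (P : ProbMass (Obs 𝒴 D Z)) (Q₀ : ProbMass (Latent 𝒴 D Z))
    (alpha : D → ℝ) (ym yM : ↥𝒴) (halpha : ∀ d, 0 ≤ alpha d ∧ alpha d ≤ 1) :
    ProbMass (Latent 𝒴 D Z) :=
  ⟨QmassF P Q₀ alpha ym yM, QmassF_nonneg P Q₀ ym yM halpha, QmassF_total P Q₀ alpha ym yM⟩

lemma Qprime_mass (P : ProbMass (Obs 𝒴 D Z)) (Q₀ : ProbMass (Latent 𝒴 D Z))
    (alpha : D → ℝ) (ym yM : ↥𝒴) (halpha : ∀ d, 0 ≤ alpha d ∧ alpha d ≤ 1) :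
    (Qprime P Q₀ alpha ym yM halpha).mass = QmassF P Q₀ alpha ym yM := rfl

lemma Qprime_exog (P : ProbMass (Obs 𝒴 D Z)) (Q₀ : ProbMass (Latent 𝒴 D Z))
    (alpha : D → ℝ) (ym yM : ↥𝒴) (halpha : ∀ d, 0 ≤ alpha d ∧ alpha d ≤ 1) :
    Exog (Qprime P Q₀ alpha ym yM halpha) := by
  intro yd dz z
  rw [pr_atom, pr_12, pr_3]
  simp only [Qprime_mass]
  rw [QmassF_sum_z, QmassF_sum_yd_dz, QmassF_apply]
  ring

lemma Qprime_marg (P : ProbMass (Obs 𝒴 D Z)) (Q₀ : ProbMass (Latent 𝒴 D Z))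
    (alpha : D → ℝ) (ym yM : ↥𝒴) (halpha : ∀ d, 0 ≤ alpha d ∧ alpha d ≤ 1) (dz : Z → D) :
    pr (Qprime P Q₀ alpha ym yM halpha) {ω | ω.2.1 = dz} = pr Q₀ {ω | ω.2.1 = dz} := by
  rw [pr_2, pr_2]
  simp only [Qprime_mass]
  have h1 : ∀ yd : D → ↥𝒴, ∑ z : Z, QmassF P Q₀ alpha ym yM (yd, dz, z)
      = muOf Q₀ dz * ∏ d, nuC Q₀ alpha ym yM d dz (yd d) :=
    fun yd => QmassF_sum_z P Q₀ alpha ym yM yd dz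
  rw [Finset.sum_congr rfl fun yd _ => h1 yd, ← Finset.mul_sum, sum_pi_nuC, mul_one]
  rfl

/-- Collapse of an observation-space triple sum. -/
lemma sum_mass_ite3 (P : ProbMass (Obs 𝒴 D Z)) (y : ↥𝒴) (d : D) (z : Z) :
    ∑ o : Obs 𝒴 D Z, P.mass o *
        (if o.2.1 = d ∧ o.2.2 = z then (if o.1 = y then (1:ℝ) else 0) else 0)
      = P.mass (y, d, z) := by
  rw [sum_triple (fun o : Obs 𝒴 D Z => P.mass o *
    (if o.2.1 = d ∧ o.2.2 = z then (if o.1 = y then (1:ℝ) else 0) else 0))]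
  rw [Fintype.sum_eq_single y, Fintype.sum_eq_single d, Fintype.sum_eq_single z]
  · rw [if_pos ⟨rfl, rfl⟩, if_pos rfl, mul_one]
  · intro z' hz'
    rw [if_neg fun hc => hz' hc.2, mul_zero]
  · intro d' hd'
    apply Finset.sum_eq_zero; intro z' _
    rw [if_neg fun hc => hd' hc.1, mul_zero]
  · intro y' hy'
    apply Finset.sum_eq_zero; intro d' _; apply Finset.sum_eq_zero; intro z' _
    by_cases hc : d' = d ∧ z' = z
    · rw [if_pos hc, if_neg hy', mul_zero]
    · rw [if_neg hc, mul_zero]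

/-- Rewriting the latent-side quantity of `key` as a sum over `dz`. -/
lemma Q0_sum_eq (Q₀ : ProbMass (Latent 𝒴 D Z)) (d : D) (z : Z) (y : ↥𝒴) :
    ∑ ω : Latent 𝒴 D Z, Q₀.mass ω *
        (if ω.2.1 z = d then (if ω.1 d = y then (1:ℝ) else 0) else 0)
      = ∑ dz : Z → D, (if dz z = d then wnum Q₀ d dz y else 0) := by
  rw [sum_triple (fun ω : Latent 𝒴 D Z => Q₀.mass ω *
    (if ω.2.1 z = d then (if ω.1 d = y then (1:ℝ) else 0) else 0))]
  rw [Finset.sum_comm]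
  refine Finset.sum_congr rfl fun dz _ => ?_
  by_cases hdz : dz z = d
  · rw [if_pos hdz]
    unfold wnum
    refine Finset.sum_congr rfl fun yd _ => Finset.sum_congr rfl fun z' _ => ?_
    rw [if_pos hdz]
    by_cases hy : yd d = y
    · rw [if_pos hy, if_pos hy, mul_one]
    · rw [if_neg hy, if_neg hy, mul_zero]
  · rw [if_neg hdz]
    apply Finset.sum_eq_zero; intro yd _; apply Finset.sum_eq_zero; intro z' _
    rw [if_neg hdz, mul_zero]

lemma Qprime_pr_T (P : ProbMass (Obs 𝒴 D Z)) (Q₀ : ProbMass (Latent 𝒴 D Z))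
    (alpha : D → ℝ) (ym yM : ↥𝒴) (halpha : ∀ d, 0 ≤ alpha d ∧ alpha d ≤ 1)
    (y : ↥𝒴) (d : D) (z : Z) :
    pr (Qprime P Q₀ alpha ym yM halpha) {ω | Tmap ω = ((y, d, z) : Obs 𝒴 D Z)}
      = prZ P z * ∑ dz : Z → D, (if dz z = d then wnum Q₀ d dz y else 0) := by
  classical
  rw [pr_eq_sum, sum_triple]
  simp only [Qprime_mass]
  have hz : ∀ (yd : D → ↥𝒴) (dz : Z → D),
      ∑ z' : Z, (if (yd, dz, z') ∈ {ω : Latent 𝒴 D Z | Tmap ω = ((y, d, z) : Obs 𝒴 D Z)}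
          then QmassF P Q₀ alpha ym yM (yd, dz, z') else 0)
      = (if dz z = d ∧ yd d = y then QmassF P Q₀ alpha ym yM (yd, dz, z) else 0) := by
    intro yd dz
    rw [Fintype.sum_eq_single z]
    · by_cases h : dz z = d ∧ yd d = y
      · rw [if_pos h, if_pos]
        show Tmap (yd, dz, z) = ((y, d, z) : Obs 𝒴 D Z)
        show ((yd (dz z), dz z, z) : Obs 𝒴 D Z) = (y, d, z)
        rw [h.1, h.2]
      · rw [if_neg h, if_neg]
        intro hmem
        have hmem' : Tmap (yd, dz, z) = ((y, d, z) : Obs 𝒴 D Z) := hmem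
        have h2 : dz z = d := congrArg (fun p => p.2.1) hmem'
        have h1 : yd d = y := by
          rw [← h2]; exact congrArg (fun p => p.1) hmem'
        exact h ⟨h2, h1⟩
    · intro z' hz'
      rw [if_neg]
      intro hmem
      have hmem' : Tmap (yd, dz, z') = ((y, d, z) : Obs 𝒴 D Z) := hmem
      exact hz' (congrArg (fun p => p.2.2) hmem')
  rw [Finset.sum_congr rfl fun yd _ => Finset.sum_congr rfl fun dz _ => hz yd dz,
    Finset.sum_comm]
  have hdzstep : ∀ dz : Z → D,
      ∑ yd : D → ↥𝒴, (if dz z = d ∧ yd d = y then QmassF P Q₀ alpha ym yM (yd, dz, z) else 0)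
      = prZ P z * (if dz z = d then wnum Q₀ d dz y else 0) := by
    intro dz
    by_cases hdz : dz z = d
    · have hterm : ∀ yd : D → ↥𝒴,
          (if dz z = d ∧ yd d = y then QmassF P Q₀ alpha ym yM (yd, dz, z) else 0)
          = (prZ P z * muOf Q₀ dz) * ((∏ d', nuC Q₀ alpha ym yM d' dz (yd d'))
              * (if yd d = y then (1:ℝ) else 0)) := by
        intro yd
        by_cases hy : yd d = y
        · rw [if_pos ⟨hdz, hy⟩, if_pos hy, mul_one, QmassF_apply, mul_assoc]
        · rw [if_neg fun hc => hy hc.2, if_neg hy, mul_zero, mul_zero]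
      rw [Finset.sum_congr rfl fun yd _ => hterm yd, ← Finset.mul_sum,
        sum_pi_weight (fun d' y' => nuC Q₀ alpha ym yM d' dz y') d
          (fun d' _ => sum_nuC Q₀ alpha ym yM d' dz) (fun y' => if y' = y then (1:ℝ) else 0)]
      have hcollapse : ∑ y' : ↥𝒴, nuC Q₀ alpha ym yM d dz y' * (if y' = y then (1:ℝ) else 0)
          = nuC Q₀ alpha ym yM d dz y := by
        rw [Finset.sum_congr rfl fun y' _ => ?_, sum_ite_collapse y (nuC Q₀ alpha ym yM d dz)]
        by_cases hy' : y' = y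
        · rw [if_pos hy', if_pos hy', mul_one]
        · rw [if_neg hy', if_neg hy', mul_zero]
      rw [hcollapse, if_pos hdz, mul_assoc, muOf_mul_nuC Q₀ alpha ym yM ⟨z, hdz⟩]
    · rw [if_neg hdz, mul_zero]
      apply Finset.sum_eq_zero; intro yd _
      rw [if_neg fun hc => hdz hc.1]
  rw [Finset.sum_congr rfl fun dz _ => hdzstep dz, ← Finset.mul_sum]

lemma Qprime_rationalizes (P : ProbMass (Obs 𝒴 D Z)) {Q₀ : ProbMass (Latent 𝒴 D Z)}
    (alpha : D → ℝ) (ym yM : ↥𝒴) (halpha : ∀ d, 0 ≤ alpha d ∧ alpha d ≤ 1)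
    (hE₀ : Exog Q₀) (hR₀ : Rationalizes Q₀ P) :
    Rationalizes (Qprime P Q₀ alpha ym yM halpha) P := by
  rintro ⟨y, d, z⟩
  have hkey2 : (∑ ω : Latent 𝒴 D Z, Q₀.mass ω *
        (if ω.2.1 z = d then (if ω.1 d = y then (1:ℝ) else 0) else 0)) * prZ P z
      = ∑ o : Obs 𝒴 D Z, P.mass o *
        (if o.2.1 = d ∧ o.2.2 = z then (if o.1 = y then (1:ℝ) else 0) else 0) :=
    key hE₀ hR₀ d z (fun y' => if y' = y then (1:ℝ) else 0)
  rw [sum_mass_ite3, Q0_sum_eq] at hkey2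
  rw [Qprime_pr_T P Q₀ alpha ym yM halpha y d z, ← hkey2, mul_comm]

end Engine

section ThetaLemmas
variable {𝒴 : Finset ℝ} {D Z : Type} [Fintype D] [DecidableEq D] [Fintype Z] [DecidableEq Z]

lemma Qprime_theta (P : ProbMass (Obs 𝒴 D Z)) (Q₀ : ProbMass (Latent 𝒴 D Z))
    (alpha : D → ℝ) (ym yM : ↥𝒴) (halpha : ∀ d, 0 ≤ alpha d ∧ alpha d ≤ 1) (d : D) :
    theta (Qprime P Q₀ alpha ym yM halpha) d
      = (∑ dz : Z → D, if ∃ z', dz z' = d then wmean Q₀ d dz else 0)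
        + (∑ dz : Z → D, if ∃ z', dz z' = d then 0 else muOf Q₀ dz)
          * (alpha d * (yM : ℝ) + (1 - alpha d) * (ym : ℝ)) := by
  have h0 : theta (Qprime P Q₀ alpha ym yM halpha) d
      = ∑ ω : Latent 𝒴 D Z, QmassF P Q₀ alpha ym yM ω * ((ω.1 d : ℝ)) := rfl
  rw [h0, sum_triple (fun ω : Latent 𝒴 D Z => QmassF P Q₀ alpha ym yM ω * ((ω.1 d : ℝ)))]
  have h1 : ∀ (yd : D → ↥𝒴) (dz : Z → D),
      ∑ z : Z, QmassF P Q₀ alpha ym yM (yd, dz, z) * ((yd d : ℝ))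
      = muOf Q₀ dz * ((∏ d', nuC Q₀ alpha ym yM d' dz (yd d')) * (yd d : ℝ)) := by
    intro yd dz
    rw [← Finset.sum_mul, QmassF_sum_z, mul_assoc]
  rw [Finset.sum_congr rfl fun yd _ => Finset.sum_congr rfl fun dz _ => h1 yd dz,
    Finset.sum_comm]
  have h2 : ∀ dz : Z → D,
      ∑ yd : D → ↥𝒴, muOf Q₀ dz * ((∏ d', nuC Q₀ alpha ym yM d' dz (yd d')) * (yd d : ℝ))
      = muOf Q₀ dz * ∑ y : ↥𝒴, nuC Q₀ alpha ym yM d dz y * (y : ℝ) := by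
    intro dz
    rw [← Finset.mul_sum,
      sum_pi_weight (fun d' y' => nuC Q₀ alpha ym yM d' dz y') d
        (fun d' _ => sum_nuC Q₀ alpha ym yM d' dz) (fun y' => (y' : ℝ))]
  rw [Finset.sum_congr rfl fun dz _ => h2 dz]
  have h3 : ∀ dz : Z → D,
      muOf Q₀ dz * ∑ y : ↥𝒴, nuC Q₀ alpha ym yM d dz y * (y : ℝ)
      = (if ∃ z', dz z' = d then wmean Q₀ d dz else 0)
        + (if ∃ z', dz z' = d then 0 else muOf Q₀ dz)
          * (alpha d * (yM : ℝ) + (1 - alpha d) * (ym : ℝ)) := by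
    intro dz
    by_cases h : ∃ z', dz z' = d
    · rw [if_pos h, if_pos h, zero_mul, add_zero, muOf_mul_nuC_mean Q₀ alpha ym yM h]
    · rw [if_neg h, if_neg h, zero_add, nuC_mean_out Q₀ alpha ym yM h]
  rw [Finset.sum_congr rfl fun dz _ => h3 dz, Finset.sum_add_distrib, Finset.sum_mul]

/-- Bridging `dz`-sums to `ω`-sums. -/
lemma dz_sum_wmean (Q₀ : ProbMass (Latent 𝒴 D Z)) (d : D) :
    ∑ dz : Z → D, (if ∃ z', dz z' = d then wmean Q₀ d dz else 0)
      = ∑ ω : Latent 𝒴 D Z, Q₀.mass ω * (if ∃ z', ω.2.1 z' = d then (ω.1 d : ℝ) else 0) := by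
  rw [sum_triple (fun ω : Latent 𝒴 D Z =>
    Q₀.mass ω * (if ∃ z', ω.2.1 z' = d then (ω.1 d : ℝ) else 0)), Finset.sum_comm]
  refine Finset.sum_congr rfl fun dz _ => ?_
  by_cases h : ∃ z', dz z' = d
  · rw [if_pos h]
    unfold wmean
    exact Finset.sum_congr rfl fun yd _ => Finset.sum_congr rfl fun z _ => by rw [if_pos h]
  · rw [if_neg h]
    refine (Finset.sum_eq_zero fun yd _ => Finset.sum_eq_zero fun z _ => ?_).symm
    rw [if_neg h, mul_zero]

lemma dz_sum_mu (Q₀ : ProbMass (Latent 𝒴 D Z)) (d : D) :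
    ∑ dz : Z → D, (if ∃ z', dz z' = d then 0 else muOf Q₀ dz)
      = ∑ ω : Latent 𝒴 D Z, Q₀.mass ω * (if ∃ z', ω.2.1 z' = d then 0 else 1) := by
  rw [sum_triple (fun ω : Latent 𝒴 D Z =>
    Q₀.mass ω * (if ∃ z', ω.2.1 z' = d then 0 else 1)), Finset.sum_comm]
  refine Finset.sum_congr rfl fun dz _ => ?_
  by_cases h : ∃ z', dz z' = d
  · rw [if_pos h]
    refine (Finset.sum_eq_zero fun yd _ => Finset.sum_eq_zero fun z _ => ?_).symm
    rw [if_pos h, mul_zero]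
  · rw [if_neg h]
    unfold muOf
    exact Finset.sum_congr rfl fun yd _ => Finset.sum_congr rfl fun z _ => by
      rw [if_neg h, mul_one]

/-- Under `MaxEnc`, the "`d` is ever taken" event coincides a.s. with `{D_{zs} = d}`. -/
lemma maxenc_sum_eq (Q₁ : ProbMass (Latent 𝒴 D Z)) {d : D} {zs : Z}
    (hM : MaxEnc Q₁ d zs) (v : Latent 𝒴 D Z → ℝ) :
    ∑ ω : Latent 𝒴 D Z, Q₁.mass ω * (if ∃ z', ω.2.1 z' = d then v ω else 0)
      = ∑ ω : Latent 𝒴 D Z, Q₁.mass ω * (if ω.2.1 zs = d then v ω else 0) := by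
  refine Finset.sum_congr rfl fun ω _ => ?_
  by_cases hz : ω.2.1 zs = d
  · rw [if_pos hz, if_pos ⟨zs, hz⟩]
  · by_cases he : ∃ z', ω.2.1 z' = d
    · have hm0 : Q₁.mass ω = 0 :=
        mass_eq_zero_of_pr Q₁ hM (show ω ∈ {ω : Latent 𝒴 D Z | ω.2.1 zs ≠ d ∧ ∃ z', ω.2.1 z' = d}
          from ⟨hz, he⟩)
      rw [hm0, zero_mul, zero_mul]
    · rw [if_neg hz, if_neg he]

/-- ... and the complement indicator version. -/
lemma maxenc_sum_eq' (Q₁ : ProbMass (Latent 𝒴 D Z)) {d : D} {zs : Z}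
    (hM : MaxEnc Q₁ d zs) :
    ∑ ω : Latent 𝒴 D Z, Q₁.mass ω * (if ∃ z', ω.2.1 z' = d then 0 else 1)
      = ∑ ω : Latent 𝒴 D Z, Q₁.mass ω * (if ω.2.1 zs = d then 0 else 1) := by
  refine Finset.sum_congr rfl fun ω _ => ?_
  by_cases hz : ω.2.1 zs = d
  · rw [if_pos hz, if_pos ⟨zs, hz⟩]
  · by_cases he : ∃ z', ω.2.1 z' = d
    · have hm0 : Q₁.mass ω = 0 :=
        mass_eq_zero_of_pr Q₁ hM (show ω ∈ {ω : Latent 𝒴 D Z | ω.2.1 zs ≠ d ∧ ∃ z', ω.2.1 z' = d}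
          from ⟨hz, he⟩)
      rw [hm0, zero_mul, zero_mul]
    · rw [if_neg hz, if_neg he]

/-- Splitting the expectation of `Y_d` by the event `{D_{zs} = d}`. -/
lemma theta_split (Q₁ : ProbMass (Latent 𝒴 D Z)) (d : D) (zs : Z) :
    theta Q₁ d
      = (∑ ω : Latent 𝒴 D Z, Q₁.mass ω * (if ω.2.1 zs = d then (ω.1 d : ℝ) else 0))
        + ∑ ω : Latent 𝒴 D Z, Q₁.mass ω * (if ω.2.1 zs = d then 0 else (ω.1 d : ℝ)) := by
  have h0 : theta Q₁ d = ∑ ω : Latent 𝒴 D Z, Q₁.mass ω * ((ω.1 d : ℝ)) := rfl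
  rw [h0, ← Finset.sum_add_distrib]
  refine Finset.sum_congr rfl fun ω _ => ?_
  by_cases hz : ω.2.1 zs = d
  · rw [if_pos hz, if_pos hz, mul_zero, add_zero]
  · rw [if_neg hz, if_neg hz, mul_zero, zero_add]

/-- Splitting total mass by the event `{D_{zs} = d}`. -/
lemma mass_split (Q₁ : ProbMass (Latent 𝒴 D Z)) (d : D) (zs : Z) :
    ∑ ω : Latent 𝒴 D Z, Q₁.mass ω * (if ω.2.1 zs = d then 0 else 1)
      = 1 - ∑ ω : Latent 𝒴 D Z, Q₁.mass ω * (if ω.2.1 zs = d then (1:ℝ) else 0) := by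
  rw [eq_sub_iff_add_eq, ← Finset.sum_add_distrib]
  calc ∑ ω : Latent 𝒴 D Z, (Q₁.mass ω * (if ω.2.1 zs = d then 0 else 1)
        + Q₁.mass ω * (if ω.2.1 zs = d then (1:ℝ) else 0))
      = ∑ ω : Latent 𝒴 D Z, Q₁.mass ω := by
        refine Finset.sum_congr rfl fun ω _ => ?_
        by_cases hz : ω.2.1 zs = d
        · rw [if_pos hz, if_pos hz, mul_zero, mul_one, zero_add]
        · rw [if_neg hz, if_neg hz, mul_zero, mul_one, add_zero]
    _ = 1 := Q₁.total

end ThetaLemmas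

section Alpha
variable {𝒴 : Finset ℝ} {D Z : Type} [Fintype D] [DecidableEq D] [Fintype Z] [DecidableEq Z]

/-- `E_Q[Y_d 1{D_{z*(d)} ≠ d}]`. -/
noncomputable def eQf (Q : ProbMass (Latent 𝒴 D Z)) (zs : D → Z) (d : D) : ℝ :=
  ∑ ω : Latent 𝒴 D Z, Q.mass ω * (if ω.2.1 (zs d) = d then 0 else (ω.1 d : ℝ))

/-- `Q{D_{z*(d)} ≠ d}`. -/
noncomputable def mQf (Q : ProbMass (Latent 𝒴 D Z)) (zs : D → Z) (d : D) : ℝ :=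
  ∑ ω : Latent 𝒴 D Z, Q.mass ω * (if ω.2.1 (zs d) = d then 0 else 1)

/-- The mixing weight. -/
noncomputable def alphaF (Q : ProbMass (Latent 𝒴 D Z)) (zs : D → Z) (ym yM : ↥𝒴) (d : D) : ℝ :=
  if mQf Q zs d = 0 then 0
  else (eQf Q zs d / mQf Q zs d - (ym : ℝ)) / ((yM : ℝ) - (ym : ℝ))

lemma mQf_term_nonneg (Q : ProbMass (Latent 𝒴 D Z)) (zs : D → Z) (d : D)
    (ω : Latent 𝒴 D Z) : 0 ≤ Q.mass ω * (if ω.2.1 (zs d) = d then 0 else 1) := by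
  refine mul_nonneg (Q.nonneg ω) ?_
  split
  · exact le_refl 0
  · exact zero_le_one

lemma mQf_nonneg (Q : ProbMass (Latent 𝒴 D Z)) (zs : D → Z) (d : D) : 0 ≤ mQf Q zs d :=
  Finset.sum_nonneg fun ω _ => mQf_term_nonneg Q zs d ω

lemma eQf_lo (Q : ProbMass (Latent 𝒴 D Z)) (zs : D → Z) (d : D) (ym : ↥𝒴)
    (hym : ∀ y : ↥𝒴, (ym : ℝ) ≤ y) : (ym : ℝ) * mQf Q zs d ≤ eQf Q zs d := by
  unfold mQf eQf
  rw [Finset.mul_sum]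
  refine Finset.sum_le_sum fun ω _ => ?_
  by_cases hz : ω.2.1 (zs d) = d
  · rw [if_pos hz, if_pos hz, mul_zero, mul_zero]
  · rw [if_neg hz, if_neg hz, mul_one]
    calc (ym : ℝ) * Q.mass ω = Q.mass ω * (ym : ℝ) := mul_comm _ _
      _ ≤ Q.mass ω * (ω.1 d : ℝ) := mul_le_mul_of_nonneg_left (hym (ω.1 d)) (Q.nonneg ω)

lemma eQf_hi (Q : ProbMass (Latent 𝒴 D Z)) (zs : D → Z) (d : D) (yM : ↥𝒴)
    (hyM : ∀ y : ↥𝒴, (y : ℝ) ≤ yM) : eQf Q zs d ≤ (yM : ℝ) * mQf Q zs d := by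
  unfold mQf eQf
  rw [Finset.mul_sum]
  refine Finset.sum_le_sum fun ω _ => ?_
  by_cases hz : ω.2.1 (zs d) = d
  · rw [if_pos hz, if_pos hz, mul_zero, mul_zero]
  · rw [if_neg hz, if_neg hz, mul_one]
    calc Q.mass ω * (ω.1 d : ℝ) ≤ Q.mass ω * (yM : ℝ) :=
          mul_le_mul_of_nonneg_left (hyM (ω.1 d)) (Q.nonneg ω)
      _ = (yM : ℝ) * Q.mass ω := mul_comm _ _

lemma eQf_zero (Q : ProbMass (Latent 𝒴 D Z)) (zs : D → Z) (d : D)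
    (h : mQf Q zs d = 0) : eQf Q zs d = 0 := by
  have hterm : ∀ ω : Latent 𝒴 D Z, Q.mass ω * (if ω.2.1 (zs d) = d then 0 else 1) = 0 :=
    fun ω => (Finset.sum_eq_zero_iff_of_nonneg
      (fun ω _ => mQf_term_nonneg Q zs d ω)).mp h ω (Finset.mem_univ ω)
  refine Finset.sum_eq_zero fun ω _ => ?_
  by_cases hz : ω.2.1 (zs d) = d
  · rw [if_pos hz, mul_zero]
  · have := hterm ω
    rw [if_neg hz, mul_one] at this
    rw [if_neg hz, this, zero_mul]

lemma alphaF_mem (Q : ProbMass (Latent 𝒴 D Z)) (zs : D → Z) (ym yM : ↥𝒴)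
    (hlt : (ym : ℝ) < yM) (hym : ∀ y : ↥𝒴, (ym : ℝ) ≤ y) (hyM : ∀ y : ↥𝒴, (y : ℝ) ≤ yM)
    (d : D) : 0 ≤ alphaF Q zs ym yM d ∧ alphaF Q zs ym yM d ≤ 1 := by
  unfold alphaF
  by_cases h : mQf Q zs d = 0
  · rw [if_pos h]
    exact ⟨le_refl 0, zero_le_one⟩
  · rw [if_neg h]
    have hmpos : 0 < mQf Q zs d := lt_of_le_of_ne (mQf_nonneg Q zs d) (Ne.symm h)
    have hsub : (0:ℝ) < (yM : ℝ) - (ym : ℝ) := by linarith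
    have hlo := eQf_lo Q zs d ym hym
    have hhi := eQf_hi Q zs d yM hyM
    have h1 : (ym : ℝ) ≤ eQf Q zs d / mQf Q zs d := by
      rw [le_div_iff₀ hmpos]; linarith
    have h2 : eQf Q zs d / mQf Q zs d ≤ (yM : ℝ) := by
      rw [div_le_iff₀ hmpos]; linarith
    constructor
    · exact div_nonneg (by linarith) (le_of_lt hsub)
    · rw [div_le_one hsub]; linarith

lemma alphaF_key (Q : ProbMass (Latent 𝒴 D Z)) (zs : D → Z) (ym yM : ↥𝒴)
    (hlt : (ym : ℝ) < yM) (d : D) :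
    mQf Q zs d * (alphaF Q zs ym yM d * (yM : ℝ) + (1 - alphaF Q zs ym yM d) * (ym : ℝ))
      = eQf Q zs d := by
  unfold alphaF
  by_cases h : mQf Q zs d = 0
  · rw [if_pos h, h, zero_mul, eQf_zero Q zs d h]
  · rw [if_neg h]
    have hsub : ((yM : ℝ) - (ym : ℝ)) ≠ 0 := by linarith
    set a : ℝ := (eQf Q zs d / mQf Q zs d - (ym : ℝ)) / ((yM : ℝ) - (ym : ℝ)) with ha
    have h1 : a * ((yM : ℝ) - (ym : ℝ)) = eQf Q zs d / mQf Q zs d - (ym : ℝ) := by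
      rw [ha, div_mul_cancel₀ _ hsub]
    have h2 : a * (yM : ℝ) + (1 - a) * (ym : ℝ) = eQf Q zs d / mQf Q zs d := by nlinarith [h1]
    rw [h2, mul_comm, div_mul_cancel₀ _ h]

end Alpha

/-- Theorem 3.1: if every `Q ∈ 𝐐` satisfies instrument exogeneity and
generalized monotonicity and `𝐐` does not restrict potential outcomes, then for any `P`
consistent with `𝐐`, `Θ₀(P, 𝐐) = Θ₀(P, 𝐐*_{E,M}) = Θ₀(P, 𝐐*_E)`. -/
theorem no_identifying_power
    (𝒴 : Finset ℝ) (h𝒴 : 2 ≤ 𝒴.card)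
    (D Z : Type) [Fintype D] [DecidableEq D] [Nontrivial D]
    [Fintype Z] [DecidableEq Z] [Nontrivial Z]
    (QQ : Set (ProbMass (Latent 𝒴 D Z)))
    (hsub : ∀ Q ∈ QQ, Exog Q ∧ GenMono Q)
    (hU : UnrestrictedPO QQ)
    (P : ProbMass (Obs 𝒴 D Z))
    (hP : ∀ z : Z, 0 < prZ P z)
    (hne : (Q0 P QQ).Nonempty) :
    Theta0 P QQ = Theta0 P {Q | Exog Q ∧ GenMono Q} ∧
      Theta0 P {Q | Exog Q ∧ GenMono Q} = Theta0 P {Q | Exog Q} := by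
  classical
  obtain ⟨Q₀, hQ₀QQ, hQ₀rat⟩ := hne
  obtain ⟨hE₀, hM₀⟩ := hsub Q₀ hQ₀QQ
  have h𝒴ne : 𝒴.Nonempty := Finset.card_pos.mp (by omega)
  set ym : ↥𝒴 := ⟨𝒴.min' h𝒴ne, 𝒴.min'_mem h𝒴ne⟩ with hymdef
  set yM : ↥𝒴 := ⟨𝒴.max' h𝒴ne, 𝒴.max'_mem h𝒴ne⟩ with hyMdef
  have hlt : (ym : ℝ) < (yM : ℝ) := 𝒴.min'_lt_max'_of_card (by omega)
  have hym : ∀ y : ↥𝒴, (ym : ℝ) ≤ y := fun y => 𝒴.min'_le _ y.2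
  have hyM : ∀ y : ↥𝒴, (y : ℝ) ≤ yM := fun y => 𝒴.le_max' _ y.2
  choose zs hzs using hM₀
  have hsub1 : Theta0 P QQ ⊆ Theta0 P {Q | Exog Q ∧ GenMono Q} :=
    Set.image_mono fun Q hQ => ⟨hsub Q hQ.1, hQ.2⟩
  have hsub2 : Theta0 P {Q | Exog Q ∧ GenMono Q} ⊆ Theta0 P {Q | Exog Q} :=
    Set.image_mono fun Q hQ => ⟨hQ.1.1, hQ.2⟩
  have hsub3 : Theta0 P {Q | Exog Q} ⊆ Theta0 P QQ := by
    rintro θ ⟨Q, ⟨hQE, hQR⟩, rfl⟩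
    have hQE' : Exog Q := hQE
    have halpha : ∀ d, 0 ≤ alphaF Q zs ym yM d ∧ alphaF Q zs ym yM d ≤ 1 :=
      alphaF_mem Q zs ym yM hlt hym hyM
    refine ⟨Qprime P Q₀ (alphaF Q zs ym yM) ym yM halpha, ⟨?_, ?_⟩, ?_⟩
    · exact hU Q₀ hQ₀QQ _ (Qprime_exog P Q₀ _ ym yM halpha)
        (fun dz => Qprime_marg P Q₀ _ ym yM halpha dz)
    · exact Qprime_rationalizes P _ ym yM halpha hE₀ hQ₀rat
    · funext d
      have hprne : prZ P (zs d) ≠ 0 := ne_of_gt (hP (zs d))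
      have hA : (∑ dz : Z → D, if ∃ z', dz z' = d then wmean Q₀ d dz else 0)
          = ∑ ω : Latent 𝒴 D Z, Q₀.mass ω * (if ω.2.1 (zs d) = d then (ω.1 d : ℝ) else 0) :=
        (dz_sum_wmean Q₀ d).trans (maxenc_sum_eq Q₀ (hzs d) (fun ω => (ω.1 d : ℝ)))
      have hMM : (∑ dz : Z → D, if ∃ z', dz z' = d then 0 else muOf Q₀ dz)
          = ∑ ω : Latent 𝒴 D Z, Q₀.mass ω * (if ω.2.1 (zs d) = d then 0 else 1) :=
        (dz_sum_mu Q₀ d).trans (maxenc_sum_eq' Q₀ (hzs d))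
      have k1 : (∑ ω : Latent 𝒴 D Z, Q₀.mass ω *
            (if ω.2.1 (zs d) = d then (ω.1 d : ℝ) else 0)) * prZ P (zs d)
          = ∑ o : Obs 𝒴 D Z, P.mass o *
            (if o.2.1 = d ∧ o.2.2 = zs d then (o.1 : ℝ) else 0) :=
        key hE₀ hQ₀rat d (zs d) (fun y => (y : ℝ))
      have k2 : (∑ ω : Latent 𝒴 D Z, Q.mass ω *
            (if ω.2.1 (zs d) = d then (ω.1 d : ℝ) else 0)) * prZ P (zs d)
          = ∑ o : Obs 𝒴 D Z, P.mass o *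
            (if o.2.1 = d ∧ o.2.2 = zs d then (o.1 : ℝ) else 0) :=
        key hQE' hQR d (zs d) (fun y => (y : ℝ))
      have hkB : (∑ ω : Latent 𝒴 D Z, Q₀.mass ω *
            (if ω.2.1 (zs d) = d then (ω.1 d : ℝ) else 0))
          = ∑ ω : Latent 𝒴 D Z, Q.mass ω *
            (if ω.2.1 (zs d) = d then (ω.1 d : ℝ) else 0) :=
        mul_right_cancel₀ hprne (k1.trans k2.symm)
      have s1 : (∑ ω : Latent 𝒴 D Z, Q₀.mass ω *
            (if ω.2.1 (zs d) = d then (1:ℝ) else 0)) * prZ P (zs d)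
          = ∑ o : Obs 𝒴 D Z, P.mass o *
            (if o.2.1 = d ∧ o.2.2 = zs d then (1:ℝ) else 0) :=
        key hE₀ hQ₀rat d (zs d) (fun _ => (1:ℝ))
      have s2 : (∑ ω : Latent 𝒴 D Z, Q.mass ω *
            (if ω.2.1 (zs d) = d then (1:ℝ) else 0)) * prZ P (zs d)
          = ∑ o : Obs 𝒴 D Z, P.mass o *
            (if o.2.1 = d ∧ o.2.2 = zs d then (1:ℝ) else 0) :=
        key hQE' hQR d (zs d) (fun _ => (1:ℝ))
      have hks : (∑ ω : Latent 𝒴 D Z, Q₀.mass ω * (if ω.2.1 (zs d) = d then (1:ℝ) else 0))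
          = ∑ ω : Latent 𝒴 D Z, Q.mass ω * (if ω.2.1 (zs d) = d then (1:ℝ) else 0) :=
        mul_right_cancel₀ hprne (s1.trans s2.symm)
      have hmm : (∑ ω : Latent 𝒴 D Z, Q₀.mass ω * (if ω.2.1 (zs d) = d then 0 else 1))
          = mQf Q zs d := by
        rw [mass_split Q₀ d (zs d), hks, ← mass_split Q d (zs d)]
        rfl
      have hsplitQ : theta Q d
          = (∑ ω : Latent 𝒴 D Z, Q.mass ω * (if ω.2.1 (zs d) = d then (ω.1 d : ℝ) else 0))
            + eQf Q zs d :=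
        theta_split Q d (zs d)
      have hmix := alphaF_key Q zs ym yM hlt d
      calc theta (Qprime P Q₀ (alphaF Q zs ym yM) ym yM halpha) d
          = (∑ dz : Z → D, if ∃ z', dz z' = d then wmean Q₀ d dz else 0)
            + (∑ dz : Z → D, if ∃ z', dz z' = d then 0 else muOf Q₀ dz)
              * (alphaF Q zs ym yM d * (yM : ℝ) + (1 - alphaF Q zs ym yM d) * (ym : ℝ)) :=
            Qprime_theta P Q₀ _ ym yM halpha d
        _ = (∑ ω : Latent 𝒴 D Z, Q.mass ω * (if ω.2.1 (zs d) = d then (ω.1 d : ℝ) else 0))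
            + mQf Q zs d
              * (alphaF Q zs ym yM d * (yM : ℝ) + (1 - alphaF Q zs ym yM d) * (ym : ℝ)) := by
            rw [hA, hkB, hMM, hmm]
        _ = (∑ ω : Latent 𝒴 D Z, Q.mass ω * (if ω.2.1 (zs d) = d then (ω.1 d : ℝ) else 0))
            + eQf Q zs d := by rw [hmix]
        _ = theta Q d := hsplitQ.symm
  exact ⟨Set.Subset.antisymm hsub1 (fun θ hθ => hsub3 (hsub2 hθ)),
    Set.Subset.antisymm hsub2 (fun θ hθ => hsub1 (hsub3 hθ))⟩
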